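/- Let d > 0, α₀ ∈ ℝ with α₀d/π ∉ ℤ∖{0}, and for j ≥ 2 set ψ_j(x₂) = cos(μ_j x₂) − i(α₀/μ_j) sin(μ_j x₂), φ_j(x₂) = conj(A_j ψ_j(x₂)) with A_j = 2μ_j²/((μ_j² − α₀²)d) and μ_j = πj/d. Then for all integers j, k ≥ 2, ∫₀^d ψ_j(x₂) conj(φ_k(x₂)) dx₂ = δ_{jk} (the biorthonormality relation). -/

import Mathlib

open MeasureTheory

noncomputable def EE (d r : ℝ) : ℂ :=
  if r = 0 then (d : ℂ) else (Complex.exp ((r : ℂ) * Complex.I * d) - 1) / ((r : ℂ) * Complex.I)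

lemma intE (d r : ℝ) :
    (∫ x in (0:ℝ)..d, Complex.exp ((r : ℂ) * Complex.I * x)) = EE d r := by
  unfold EE
  split_ifs with h
  · simp [h]
  · have hc : (r : ℂ) * Complex.I ≠ 0 :=
      mul_ne_zero (Complex.ofReal_ne_zero.mpr h) Complex.I_ne_zero
    rw [integral_exp_mul_complex hc]
    simp

lemma int4 (d : ℝ) (c₁ c₂ c₃ c₄ : ℂ) (r₁ r₂ r₃ r₄ : ℝ) :
    (∫ x in (0:ℝ)..d, (c₁ * Complex.exp ((r₁ : ℂ) * Complex.I * x)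
      + c₂ * Complex.exp ((r₂ : ℂ) * Complex.I * x)
      + c₃ * Complex.exp ((r₃ : ℂ) * Complex.I * x)
      + c₄ * Complex.exp ((r₄ : ℂ) * Complex.I * x)))
    = c₁ * EE d r₁ + c₂ * EE d r₂ + c₃ * EE d r₃ + c₄ * EE d r₄ := by
  have hI : ∀ (r : ℝ) (c : ℂ),
      IntervalIntegrable (fun x : ℝ => c * Complex.exp ((r : ℂ) * Complex.I * x))
        volume (0:ℝ) d :=
    fun r c => ((by fun_prop : Continuous fun x : ℝ => c * Complex.exp ((r : ℂ) * Complex.I * x)).intervalIntegrable 0 d)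
  rw [intervalIntegral.integral_add (((hI r₁ c₁).add (hI r₂ c₂)).add (hI r₃ c₃)) (hI r₄ c₄),
      intervalIntegral.integral_add ((hI r₁ c₁).add (hI r₂ c₂)) (hI r₃ c₃),
      intervalIntegral.integral_add (hI r₁ c₁) (hI r₂ c₂),
      intervalIntegral.integral_const_mul, intervalIntegral.integral_const_mul,
      intervalIntegral.integral_const_mul, intervalIntegral.integral_const_mul,
      intE, intE, intE, intE]

lemma psi_exp (z b : ℂ) :
    Complex.cos z - Complex.I * b * Complex.sin z
      = (1 - b) / 2 * Complex.exp (z * Complex.I) + (1 + b) / 2 * Complex.exp (-z * Complex.I) := by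
  rw [Complex.cos, Complex.sin]
  linear_combination (-(b * (Complex.exp (-z * Complex.I) - Complex.exp (z * Complex.I))) / 2) *
    Complex.I_sq

set_option maxHeartbeats 1000000 in
lemma psi_expand (p q a x : ℝ) (hp : p ≠ 0) (hq : q ≠ 0) :
    (Complex.cos ((p:ℂ) * x) - Complex.I * ((a : ℂ) / (p : ℂ)) * Complex.sin ((p:ℂ) * x)) *
      (Complex.cos ((q:ℂ) * x) - Complex.I * ((a : ℂ) / (q : ℂ)) * Complex.sin ((q:ℂ) * x))
    = (1 - (a:ℂ)/p) * (1 - (a:ℂ)/q) / 4 * Complex.exp (((p+q : ℝ) : ℂ) * Complex.I * x)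
    + (1 - (a:ℂ)/p) * (1 + (a:ℂ)/q) / 4 * Complex.exp (((p-q : ℝ) : ℂ) * Complex.I * x)
    + (1 + (a:ℂ)/p) * (1 - (a:ℂ)/q) / 4 * Complex.exp (((q-p : ℝ) : ℂ) * Complex.I * x)
    + (1 + (a:ℂ)/p) * (1 + (a:ℂ)/q) / 4 * Complex.exp (((-(p+q) : ℝ) : ℂ) * Complex.I * x) := by
  have hp' : (p:ℂ) ≠ 0 := Complex.ofReal_ne_zero.mpr hp
  have hq' : (q:ℂ) ≠ 0 := Complex.ofReal_ne_zero.mpr hq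
  have h1 : (((p+q:ℝ)):ℂ) * Complex.I * x
      = (p:ℂ)*x*Complex.I + (q:ℂ)*x*Complex.I := by push_cast; ring
  have h2 : (((p-q:ℝ)):ℂ) * Complex.I * x
      = (p:ℂ)*x*Complex.I + (-((q:ℂ)*x))*Complex.I := by push_cast; ring
  have h3 : (((q-p:ℝ)):ℂ) * Complex.I * x
      = (-((p:ℂ)*x))*Complex.I + (q:ℂ)*x*Complex.I := by push_cast; ring
  have h4 : (((-(p+q):ℝ)):ℂ) * Complex.I * x
      = (-((p:ℂ)*x))*Complex.I + (-((q:ℂ)*x))*Complex.I := by push_cast; ring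
  rw [h1, h2, h3, h4, Complex.exp_add, Complex.exp_add, Complex.exp_add, Complex.exp_add,
      psi_exp ((p:ℂ)*x) ((a:ℂ)/p), psi_exp ((q:ℂ)*x) ((a:ℂ)/q)]
  field_simp
  ring

lemma alg_cancel (u v a B : ℂ) (hu : u ≠ 0) (hv : v ≠ 0)
    (hs : u + v ≠ 0) (hdf : u - v ≠ 0) :
    B * ((1 - a/u) * (1 - a/v) / 4) * ((-1 - 1) / ((u + v) * Complex.I))
    + B * ((1 - a/u) * (1 + a/v) / 4) * ((-1 - 1) / ((u - v) * Complex.I))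
    + B * ((1 + a/u) * (1 - a/v) / 4) * ((-1 - 1) / ((v - u) * Complex.I))
    + B * ((1 + a/u) * (1 + a/v) / 4) * ((-1 - 1) / (-(u + v) * Complex.I)) = 0 := by
  have hI := Complex.I_ne_zero
  have hvu : v - u ≠ 0 := fun h => hdf (by linear_combination -h)
  have ne1 : (u + v) * Complex.I ≠ 0 := mul_ne_zero hs hI
  have ne2 : (u - v) * Complex.I ≠ 0 := mul_ne_zero hdf hI
  have ne3 : (v - u) * Complex.I ≠ 0 := mul_ne_zero hvu hI
  have ne4 : -(u + v) * Complex.I ≠ 0 := mul_ne_zero (neg_ne_zero.mpr hs) hI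
  simp only [← mul_div_assoc]
  rw [div_add_div _ _ ne1 ne2, div_add_div _ _ (mul_ne_zero ne1 ne2) ne3,
      div_add_div _ _ (mul_ne_zero (mul_ne_zero ne1 ne2) ne3) ne4, div_eq_zero_iff]
  left
  field_simp
  ring

set_option maxHeartbeats 2000000 in
theorem stmt6 (d : ℝ) (hd : 0 < d) (α₀ : ℝ)
    (hyp : ∀ n : ℤ, n ≠ 0 → α₀ * d / Real.pi ≠ (n : ℝ)) :
    let μ : ℕ → ℝ := fun j => Real.pi * j / d
    let ψ : ℕ → ℝ → ℂ := fun j x₂ =>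
      Complex.cos (μ j * x₂) -
        Complex.I * ((α₀ : ℂ) / (μ j)) * Complex.sin (μ j * x₂)
    let A : ℕ → ℂ := fun j => 2 * (μ j : ℂ) ^ 2 / (((μ j : ℂ) ^ 2 - (α₀ : ℂ) ^ 2) * d)
    let φ : ℕ → ℝ → ℂ := fun j x₂ => starRingEnd ℂ (A j * ψ j x₂)
    ∀ j k : ℕ, 2 ≤ j → 2 ≤ k →
      ∫ x₂ in (0 : ℝ)..d, ψ j x₂ * starRingEnd ℂ (φ k x₂) =
        if j = k then 1 else 0 := by
  intro μ ψ A φ j k hj hk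
  have hπ : Real.pi ≠ 0 := Real.pi_ne_zero
  have hd' : d ≠ 0 := ne_of_gt hd
  have hdC : (d : ℂ) ≠ 0 := Complex.ofReal_ne_zero.mpr hd'
  have hπC : ((Real.pi : ℝ) : ℂ) ≠ 0 := Complex.ofReal_ne_zero.mpr hπ
  have hμ : ∀ m : ℕ, 2 ≤ m → μ m ≠ 0 := by
    intro m hm
    have h0 : (0 : ℝ) < m := by exact_mod_cast lt_of_lt_of_le (by norm_num) hm
    have : 0 < μ m := by simp only [μ]; positivity
    exact this.ne'
  have hkey : ∀ m : ℕ, 2 ≤ m → (μ m) ^ 2 - α₀ ^ 2 ≠ 0 := by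
    intro m hm h
    have hm0 : (m : ℤ) ≠ 0 := by omega
    have h3 : (α₀ - μ m) * (α₀ + μ m) = 0 := by linear_combination -h
    rcases mul_eq_zero.mp h3 with h4 | h4
    · refine hyp m hm0 ?_
      have h5 : α₀ = μ m := by linarith
      rw [h5]; simp only [μ]; push_cast; field_simp <;> ring
    · refine hyp (-(m : ℤ)) (by simpa using hm0) ?_
      have h5 : α₀ = -(μ m) := by linarith
      rw [h5]; simp only [μ]; push_cast; field_simp <;> ring
  have hEE0 : EE d 0 = (d : ℂ) := by simp [EE]
  have hEE : ∀ m : ℤ, m ≠ 0 → EE d (Real.pi * (m : ℝ) / d)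
      = ((-1 : ℂ) ^ m - 1) / (((Real.pi * (m : ℝ) / d : ℝ) : ℂ) * Complex.I) := by
    intro m hm
    have hr : (Real.pi * (m : ℝ) / d) ≠ 0 :=
      div_ne_zero (mul_ne_zero hπ (Int.cast_ne_zero.mpr hm)) hd'
    have harg : (((Real.pi * (m : ℝ) / d : ℝ)) : ℂ) * Complex.I * (d : ℂ)
        = (m : ℂ) * ((Real.pi : ℂ) * Complex.I) := by
      push_cast; field_simp <;> ring
    simp only [EE, if_neg hr, harg, Complex.exp_int_mul, Complex.exp_pi_mul_I]
  have hexpand : Set.EqOn (fun x : ℝ => ψ j x * starRingEnd ℂ (φ k x))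
      (fun x : ℝ =>
        (A k * ((1 - (α₀:ℂ)/(μ j)) * (1 - (α₀:ℂ)/(μ k)) / 4))
          * Complex.exp (((μ j + μ k : ℝ) : ℂ) * Complex.I * x)
      + (A k * ((1 - (α₀:ℂ)/(μ j)) * (1 + (α₀:ℂ)/(μ k)) / 4))
          * Complex.exp (((μ j - μ k : ℝ) : ℂ) * Complex.I * x)
      + (A k * ((1 + (α₀:ℂ)/(μ j)) * (1 - (α₀:ℂ)/(μ k)) / 4))
          * Complex.exp (((μ k - μ j : ℝ) : ℂ) * Complex.I * x)
      + (A k * ((1 + (α₀:ℂ)/(μ j)) * (1 + (α₀:ℂ)/(μ k)) / 4))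
          * Complex.exp (((-(μ j + μ k) : ℝ) : ℂ) * Complex.I * x))
      (Set.uIcc 0 d) := by
    intro x _
    simp only [ψ, φ, Complex.conj_conj]
    have h := psi_expand (μ j) (μ k) α₀ x (hμ j hj) (hμ k hk)
    push_cast at h ⊢
    linear_combination (A k) * h
  rw [intervalIntegral.integral_congr hexpand, int4]
  by_cases hjk : j = k
  · subst hjk
    rw [if_pos rfl]
    have hjZ : (j : ℤ) ≠ 0 := by omega
    have e0 : μ j - μ j = 0 := sub_self _
    have h2j : μ j + μ j = Real.pi * (((2 * (j : ℤ) : ℤ)) : ℝ) / d := by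
      simp only [μ]; push_cast; ring
    have h2j' : -(μ j + μ j) = Real.pi * (((-(2 * (j : ℤ)) : ℤ)) : ℝ) / d := by
      simp only [μ]; push_cast; ring
    have hp1 : ((-1 : ℂ)) ^ (2 * (j : ℤ)) = 1 := by
      rw [zpow_mul]; norm_num
    have hp2 : ((-1 : ℂ)) ^ (-(2 * (j : ℤ))) = 1 := by
      rw [zpow_neg, hp1]; norm_num
    rw [e0, hEE0, h2j', h2j, hEE _ (mul_ne_zero two_ne_zero hjZ),
        hEE _ (neg_ne_zero.mpr (mul_ne_zero two_ne_zero hjZ)), hp1, hp2]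
    have hμjC : ((μ j : ℝ) : ℂ) ≠ 0 := Complex.ofReal_ne_zero.mpr (hμ j hj)
    have hdenC : ((μ j : ℝ) : ℂ) ^ 2 - (α₀ : ℂ) ^ 2 ≠ 0 := by
      have := Complex.ofReal_ne_zero.mpr (hkey j hj)
      push_cast at this
      exact this
    simp only [A, sub_self, zero_div, mul_zero, zero_mul, add_zero, zero_add]
    field_simp
    ring
  · rw [if_neg hjk]
    have hn : (j : ℤ) + k ≠ 0 := by omega
    have hm : (j : ℤ) - k ≠ 0 := by omega
    have e1 : μ j + μ k = Real.pi * ((((j : ℤ) + k : ℤ)) : ℝ) / d := by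
      simp only [μ]; push_cast; ring
    have e2 : μ j - μ k = Real.pi * ((((j : ℤ) - k : ℤ)) : ℝ) / d := by
      simp only [μ]; push_cast; ring
    have e3 : μ k - μ j = Real.pi * (((-((j : ℤ) - k) : ℤ)) : ℝ) / d := by
      simp only [μ]; push_cast; ring
    have e4 : -(μ j + μ k) = Real.pi * (((-((j : ℤ) + k) : ℤ)) : ℝ) / d := by
      simp only [μ]; push_cast; ring
    rw [e4, e3, e2, e1, hEE _ hn, hEE _ hm, hEE _ (neg_ne_zero.mpr hm),
        hEE _ (neg_ne_zero.mpr hn)]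
    have hjC : ((j : ℕ) : ℂ) ≠ 0 := by exact_mod_cast (by omega : (j : ℤ) ≠ 0)
    have hkC : ((k : ℕ) : ℂ) ≠ 0 := by exact_mod_cast (by omega : (k : ℤ) ≠ 0)
    have hsumC : ((j : ℂ) + k) ≠ 0 := by
      have : (((j : ℤ) + k : ℤ) : ℂ) ≠ 0 := Int.cast_ne_zero.mpr hn
      push_cast at this; exact this
    have hdiffC : ((j : ℂ) - k) ≠ 0 := by
      have : (((j : ℤ) - k : ℤ) : ℂ) ≠ 0 := Int.cast_ne_zero.mpr hm
      push_cast at this; exact this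
    have hdenkC : ((μ k : ℝ) : ℂ) ^ 2 - (α₀ : ℂ) ^ 2 ≠ 0 := by
      have := Complex.ofReal_ne_zero.mpr (hkey k hk)
      push_cast at this
      exact this
    have hdenkC' : ((Real.pi : ℂ) * k / d) ^ 2 - (α₀ : ℂ) ^ 2 ≠ 0 := by
      have := hdenkC
      simp only [μ] at this
      push_cast at this
      exact this
    rcases Int.even_or_odd ((j : ℤ) + k) with he | ho
    · obtain ⟨r, hr⟩ := he
      have he' : Even ((j : ℤ) + k) := ⟨r, hr⟩
      have hme : Even ((j : ℤ) - k) := ⟨r - k, by omega⟩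
      rw [Even.neg_one_zpow he', Even.neg_one_zpow hme, Even.neg_one_zpow hme.neg,
          Even.neg_one_zpow he'.neg]
      norm_num
    · obtain ⟨r, hr⟩ := ho
      have ho' : Odd ((j : ℤ) + k) := ⟨r, hr⟩
      have hmo : Odd ((j : ℤ) - k) := ⟨r - k, by omega⟩
      rw [Odd.neg_one_zpow ho', Odd.neg_one_zpow hmo, Odd.neg_one_zpow hmo.neg,
          Odd.neg_one_zpow ho'.neg]
      have hμjk : μ j ≠ μ k := by
        intro h
        apply hjk
        simp only [μ] at h
        field_simp at h
        exact_mod_cast h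
      have hμj := hμ j hj
      have hμk := hμ k hk
      have huC : ((μ j : ℝ) : ℂ) ≠ 0 := Complex.ofReal_ne_zero.mpr hμj
      have hvC : ((μ k : ℝ) : ℂ) ≠ 0 := Complex.ofReal_ne_zero.mpr hμk
      have hsC : ((μ j : ℝ) : ℂ) + ((μ k : ℝ) : ℂ) ≠ 0 := by
        have h0 : ((μ j + μ k : ℝ) : ℂ) ≠ 0 := by
          refine Complex.ofReal_ne_zero.mpr ?_
          have h1 : 0 < μ j := lt_of_le_of_ne (by simp only [μ]; positivity) (Ne.symm hμj)
          have h2 : 0 < μ k := lt_of_le_of_ne (by simp only [μ]; positivity) (Ne.symm hμk)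
          positivity
        push_cast at h0; exact h0
      have hdC' : ((μ j : ℝ) : ℂ) - ((μ k : ℝ) : ℂ) ≠ 0 := by
        have h0 : ((μ j - μ k : ℝ) : ℂ) ≠ 0 :=
          Complex.ofReal_ne_zero.mpr (sub_ne_zero.mpr hμjk)
        push_cast at h0; exact h0
      have f1 : ((Real.pi * ((((j : ℤ) + k : ℤ)) : ℝ) / d : ℝ) : ℂ)
          = ((μ j : ℝ) : ℂ) + ((μ k : ℝ) : ℂ) := by
        simp only [μ]; push_cast; ring
      have f2 : ((Real.pi * ((((j : ℤ) - k : ℤ)) : ℝ) / d : ℝ) : ℂ)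
          = ((μ j : ℝ) : ℂ) - ((μ k : ℝ) : ℂ) := by
        simp only [μ]; push_cast; ring
      have f3 : ((Real.pi * (((-((j : ℤ) - k) : ℤ)) : ℝ) / d : ℝ) : ℂ)
          = ((μ k : ℝ) : ℂ) - ((μ j : ℝ) : ℂ) := by
        simp only [μ]; push_cast; ring
      have f4 : ((Real.pi * (((-((j : ℤ) + k) : ℤ)) : ℝ) / d : ℝ) : ℂ)
          = -(((μ j : ℝ) : ℂ) + ((μ k : ℝ) : ℂ)) := by
        simp only [μ]; push_cast; ring
      rw [f1, f2, f3, f4]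
      linear_combination alg_cancel ((μ j : ℝ) : ℂ) ((μ k : ℝ) : ℂ) (α₀ : ℂ) (A k)
        huC hvC hsC hdC'
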